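/- For every complete bipartite graph K_{m,n} with m ≥ n ≥ 1, str(K_{m,n}) = 2(m+n) - m = m + 2n. -/
import Mathlib


open SimpleGraph Finset

/-- `strf G f` is the maximum edge label `f(u)+f(v)` for the numbering given by the
equivalence `f` (vertex `v` receives label `(f v : ℕ) + 1 ∈ {1,…,n}`). -/
noncomputable def strf {V : Type*} [Fintype V] (G : SimpleGraph V)
    (f : V ≃ Fin (Fintype.card V)) : ℕ :=
  sSup {s | ∃ u v, G.Adj u v ∧ s = ((f u : ℕ) + 1) + ((f v : ℕ) + 1)}

/-- The strength of a graph: minimum over numberings of the maximum edge label. -/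
noncomputable def strength {V : Type*} [Fintype V] (G : SimpleGraph V) : ℕ :=
  sInf {s | ∃ f : V ≃ Fin (Fintype.card V), s = strf G f}

/-- The independence number of a graph. -/
noncomputable def indepNum {V : Type*} [Fintype V] (G : SimpleGraph V) : ℕ :=
  sSup {k | ∃ s : Finset V, (s : Set V).Pairwise (fun u v => ¬ G.Adj u v) ∧ s.card = k}

lemma exists_big {k N : ℕ} (hk : 1 ≤ k) (g : Fin k → Fin N) (hg : Function.Injective g) :
    ∃ j, k ≤ (g j : ℕ) + 1 := by
  by_contra h
  push_neg at h
  have hsub : Finset.univ.image (fun j => (g j : ℕ)) ⊆ Finset.range (k - 1) := by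
    intro x hx
    simp only [Finset.mem_image] at hx
    obtain ⟨j, _, rfl⟩ := hx
    have := h j
    simp only [Finset.mem_range]; omega
  have hcard : (Finset.univ.image (fun j => (g j : ℕ))).card = k := by
    rw [Finset.card_image_of_injective _ (fun a b hab => hg (Fin.val_injective hab))]
    simp
  have := Finset.card_le_card hsub
  simp [hcard, Finset.card_range] at this
  omega

theorem strength_completeBipartite (m n : ℕ) (hn : 1 ≤ n) (hmn : n ≤ m) :
    strength (completeBipartiteGraph (Fin m) (Fin n)) = m + 2 * n := by
  set G := completeBipartiteGraph (Fin m) (Fin n) with hG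
  have hcard : Fintype.card (Fin m ⊕ Fin n) = m + n := by simp
  have hcard' : n + m = Fintype.card (Fin m ⊕ Fin n) := by simp [hcard]; omega
  let f0 : (Fin m ⊕ Fin n) ≃ Fin (Fintype.card (Fin m ⊕ Fin n)) :=
    ((Equiv.sumComm (Fin m) (Fin n)).trans finSumFinEquiv).trans (finCongr hcard')
  have hf0l : ∀ i : Fin m, (f0 (Sum.inl i) : ℕ) = n + i := by
    intro i; simp [f0, finCongr]
  have hf0r : ∀ j : Fin n, (f0 (Sum.inr j) : ℕ) = j := by
    intro j; simp [f0, finCongr]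
  have hstrf0 : strf G f0 = m + 2 * n := by
    apply le_antisymm
    · apply csSup_le
      · exact ⟨(n + (m-1) + 1) + ((n-1) + 1), Sum.inl ⟨m-1, by omega⟩, Sum.inr ⟨n-1, by omega⟩,
          by simp [hG], by simp [hf0l, hf0r]⟩
      · rintro s ⟨u, v, huv, rfl⟩
        rcases u with i | j <;> rcases v with i' | j' <;> simp [hG] at huv
        · rw [hf0l, hf0r]; have := i.isLt; have := j'.isLt; omega
        · rw [hf0l, hf0r]; have := i'.isLt; have := j.isLt; omega
    · apply le_csSup
      · refine ⟨2 * (m + n) + 2, ?_⟩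
        rintro s ⟨u, v, _, rfl⟩
        have h1 := (f0 u).isLt; have h2 := (f0 v).isLt
        omega
      · exact ⟨Sum.inl ⟨m-1, by omega⟩, Sum.inr ⟨n-1, by omega⟩,
          by simp [hG], by simp [hf0l, hf0r]; omega⟩
  have hlb : ∀ f : (Fin m ⊕ Fin n) ≃ Fin (Fintype.card (Fin m ⊕ Fin n)),
      m + 2 * n ≤ strf G f := by
    intro f
    have hbdd : BddAbove {s | ∃ u v, G.Adj u v ∧ s = ((f u : ℕ) + 1) + ((f v : ℕ) + 1)} := by
      refine ⟨2 * (m + n) + 2, ?_⟩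
      rintro s ⟨u, v, _, rfl⟩
      have h1 := (f u).isLt; have h2 := (f v).isLt
      omega
    have htoplt : m + n - 1 < Fintype.card (Fin m ⊕ Fin n) := by omega
    set top : Fin (Fintype.card (Fin m ⊕ Fin n)) := ⟨m + n - 1, htoplt⟩ with htop
    have htopval : (top : ℕ) = m + n - 1 := rfl
    rcases hcases : f.symm top with i | j
    · have hfi : (f (Sum.inl i) : ℕ) = m + n - 1 := by
        rw [← hcases]; simp [htopval]
      obtain ⟨j, hj⟩ := exists_big hn (fun j : Fin n => f (Sum.inr j))
        (fun a b hab => Sum.inr_injective (f.injective hab))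
      calc m + 2 * n ≤ ((f (Sum.inl i) : ℕ) + 1) + ((f (Sum.inr j) : ℕ) + 1) := by
            rw [hfi]; omega
        _ ≤ strf G f := le_csSup hbdd ⟨Sum.inl i, Sum.inr j, by simp [hG], rfl⟩
    · have hfj : (f (Sum.inr j) : ℕ) = m + n - 1 := by
        rw [← hcases]; simp [htopval]
      obtain ⟨i, hi⟩ := exists_big (le_trans hn hmn) (fun i : Fin m => f (Sum.inl i))
        (fun a b hab => Sum.inl_injective (f.injective hab))
      calc m + 2 * n ≤ ((f (Sum.inr j) : ℕ) + 1) + ((f (Sum.inl i) : ℕ) + 1) := by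
            rw [hfj]; omega
        _ ≤ strf G f := le_csSup hbdd ⟨Sum.inr j, Sum.inl i, by simp [hG], rfl⟩
  apply le_antisymm
  · exact Nat.sInf_le ⟨f0, hstrf0.symm⟩
  · exact le_csInf ⟨m + 2 * n, f0, hstrf0.symm⟩ (by rintro s ⟨f, rfl⟩; exact hlb f)
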